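/- For any Lagrangian subspaces Λ1, Λ2, Λ3, Π of a symplectic vector space Σ, the positive Maslov index satisfies the triangle inequality ind_Π(Λ1, Λ3) ≤ ind_Π(Λ1, Λ2) + ind_Π(Λ2, Λ3). -/

import Mathlib

open Module Submodule

/-- The skew-orthogonal complement (with respect to a bilinear form `σ`)
of a subspace `Γ`: all vectors `x` with `σ x y = 0` for all `y ∈ Γ`. -/
def skewCompl {E : Type*} [AddCommGroup E] [Module ℝ E]
    (σ : E →ₗ[ℝ] E →ₗ[ℝ] ℝ) (Γ : Submodule ℝ E) : Submodule ℝ E where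
  carrier := {x | ∀ y ∈ Γ, σ x y = 0}
  zero_mem' := by intro y hy; simp
  add_mem' := by
    intro a b ha hb y hy
    have h1 := ha y hy
    have h2 := hb y hy
    simp only [map_add, LinearMap.add_apply]
    rw [h1, h2, add_zero]
  smul_mem' := by
    intro c a ha y hy
    have h1 := ha y hy
    simp only [map_smul, LinearMap.smul_apply, smul_eq_mul]
    rw [h1, mul_zero]

/-- A subspace is Lagrangian if it coincides with its skew-orthogonal complement. -/
def IsLagrangian {E : Type*} [AddCommGroup E] [Module ℝ E]
    (σ : E →ₗ[ℝ] E →ₗ[ℝ] ℝ) (Λ : Submodule ℝ E) : Prop :=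
  Λ = skewCompl σ Λ

/-- The positive inertia index of the quadratic form `q` on `(Λ1 + Λ2) ∩ P` given by
`q (λ1 + λ2) = σ λ1 λ2` (`λi ∈ Λi`). -/
noncomputable def posIndPair {E : Type*} [AddCommGroup E] [Module ℝ E]
    (σ : E →ₗ[ℝ] E →ₗ[ℝ] ℝ) (P Λ1 Λ2 : Submodule ℝ E) : ℕ :=
  sSup {k | ∃ W : Submodule ℝ E, W ≤ (Λ1 ⊔ Λ2) ⊓ P ∧
    (∀ x ∈ W, x ≠ 0 → ∀ x1 ∈ Λ1, ∀ x2 ∈ Λ2, x = x1 + x2 → 0 < σ x1 x2) ∧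
    Module.finrank ℝ W = k}

/-- The positive Maslov index of the triple `(Λ1, P, Λ2)` of Lagrangian subspaces:
`ind_P (Λ1, Λ2) = ind⁺ q + (dim (Λ1 ∩ P) + dim (Λ2 ∩ P)) / 2 - dim (Λ1 ∩ Λ2 ∩ P)`. -/
noncomputable def maslovInd {E : Type*} [AddCommGroup E] [Module ℝ E]
    (σ : E →ₗ[ℝ] E →ₗ[ℝ] ℝ) (P Λ1 Λ2 : Submodule ℝ E) : ℚ :=
  (posIndPair σ P Λ1 Λ2 : ℚ)
    + ((Module.finrank ℝ ↥(Λ1 ⊓ P) : ℚ) + (Module.finrank ℝ ↥(Λ2 ⊓ P) : ℚ)) / 2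
    - (Module.finrank ℝ ↥(Λ1 ⊓ Λ2 ⊓ P) : ℚ)

section Part1

variable {E : Type*} [AddCommGroup E] [Module ℝ E] [FiniteDimensional ℝ E]
  (σ : E →ₗ[ℝ] E →ₗ[ℝ] ℝ)

lemma mem_skewCompl {Γ : Submodule ℝ E} {x : E} :
    x ∈ skewCompl σ Γ ↔ ∀ y ∈ Γ, σ x y = 0 := Iff.rfl

variable (halt : ∀ x : E, σ x x = 0)

include halt in
lemma sigma_skew (x y : E) : σ x y = - σ y x := by
  have h := halt (x + y)
  simp only [map_add, LinearMap.add_apply] at h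
  rw [halt x, halt y] at h
  linarith

include halt in
lemma skewCompl_eq_orthogonal (Γ : Submodule ℝ E) :
    skewCompl σ Γ = LinearMap.BilinForm.orthogonal σ Γ := by
  ext x
  constructor
  · intro hx y hy
    have := hx y hy
    show σ y x = 0
    rw [sigma_skew σ halt y x, this, neg_zero]
  · intro hx y hy
    have := hx y hy
    replace this : σ y x = 0 := this
    rw [sigma_skew σ halt x y, this, neg_zero]

variable (hnondeg : ∀ x : E, (∀ y : E, σ x y = 0) → x = 0)

include halt hnondeg in
lemma finrank_add_finrank_skewCompl (Γ : Submodule ℝ E) :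
    finrank ℝ Γ + finrank ℝ (skewCompl σ Γ) = finrank ℝ E := by
  have hrefl : LinearMap.BilinForm.IsRefl σ := by
    intro x y h
    rw [sigma_skew σ halt y x, h, neg_zero]
  have htop : LinearMap.BilinForm.orthogonal σ ⊤ = ⊥ := by
    rw [Submodule.eq_bot_iff]
    intro x hx
    refine hnondeg x fun y => ?_
    rw [sigma_skew σ halt x y, hx y Submodule.mem_top, neg_zero]
  rw [skewCompl_eq_orthogonal σ halt,
    LinearMap.BilinForm.finrank_add_finrank_orthogonal hrefl,
    htop, inf_bot_eq, finrank_bot, add_zero]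

include halt in
lemma le_skewCompl_skewCompl (Γ : Submodule ℝ E) : Γ ≤ skewCompl σ (skewCompl σ Γ) := by
  intro x hx y hy
  rw [sigma_skew σ halt x y, hy x hx, neg_zero]

include halt hnondeg in
lemma skewCompl_skewCompl (Γ : Submodule ℝ E) : skewCompl σ (skewCompl σ Γ) = Γ := by
  refine (Submodule.eq_of_le_of_finrank_le (le_skewCompl_skewCompl σ halt Γ) ?_).symm
  have h1 := finrank_add_finrank_skewCompl σ halt hnondeg Γ
  have h2 := finrank_add_finrank_skewCompl σ halt hnondeg (skewCompl σ Γ)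
  omega

lemma skewCompl_sup (Γ Δ : Submodule ℝ E) :
    skewCompl σ (Γ ⊔ Δ) = skewCompl σ Γ ⊓ skewCompl σ Δ := by
  ext x
  constructor
  · intro hx
    exact ⟨fun y hy => hx y (Submodule.mem_sup_left hy),
      fun y hy => hx y (Submodule.mem_sup_right hy)⟩
  · rintro ⟨h1, h2⟩ y hy
    rcases Submodule.mem_sup.1 hy with ⟨a, ha, b, hb, rfl⟩
    rw [map_add, h1 a ha, h2 b hb, add_zero]

lemma skewCompl_mono {Γ Δ : Submodule ℝ E} (h : Γ ≤ Δ) : skewCompl σ Δ ≤ skewCompl σ Γ :=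
  fun _ hx y hy => hx y (h hy)

include halt hnondeg in
lemma skewCompl_inf (Γ Δ : Submodule ℝ E) :
    skewCompl σ (Γ ⊓ Δ) = skewCompl σ Γ ⊔ skewCompl σ Δ := by
  have hle : skewCompl σ Γ ⊔ skewCompl σ Δ ≤ skewCompl σ (Γ ⊓ Δ) :=
    sup_le (skewCompl_mono σ inf_le_left) (skewCompl_mono σ inf_le_right)
  refine (Submodule.eq_of_le_of_finrank_le hle ?_).symm
  have h1 := finrank_add_finrank_skewCompl σ halt hnondeg (Γ ⊓ Δ)
  have h2 := finrank_add_finrank_skewCompl σ halt hnondeg Γ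
  have h3 := finrank_add_finrank_skewCompl σ halt hnondeg Δ
  have h4 := finrank_add_finrank_skewCompl σ halt hnondeg (Γ ⊔ Δ)
  have h5 := Submodule.finrank_sup_add_finrank_inf_eq Γ Δ
  have h6 := Submodule.finrank_sup_add_finrank_inf_eq (skewCompl σ Γ) (skewCompl σ Δ)
  rw [← skewCompl_sup σ Γ Δ] at h6
  omega

end Part1

section Helpers
variable {E F : Type*} [AddCommGroup E] [Module ℝ E] [FiniteDimensional ℝ E]
  [AddCommGroup F] [Module ℝ F] [FiniteDimensional ℝ F]

lemma finrank_map_add_finrank_inf_ker' (f : E →ₗ[ℝ] F) (N : Submodule ℝ E) :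
    finrank ℝ (N.map f) + finrank ℝ (N ⊓ LinearMap.ker f : Submodule ℝ E) = finrank ℝ N := by
  have h := LinearMap.finrank_range_add_finrank_ker (f.domRestrict N)
  rw [LinearMap.range_domRestrict] at h
  have hker : LinearMap.ker (f.domRestrict N) = (N ⊓ LinearMap.ker f).comap N.subtype := by
    ext x
    simp [LinearMap.mem_ker, LinearMap.domRestrict_apply, Submodule.mem_comap, x.2]
  rw [hker] at h
  rw [← h]
  congr 1
  rw [← Submodule.finrank_map_subtype_eq (N) ((N ⊓ LinearMap.ker f).comap N.subtype),
    Submodule.map_comap_subtype, inf_of_le_right (inf_le_left)]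

lemma finrank_le_of_map_le {f : E →ₗ[ℝ] F} {N : Submodule ℝ E} {M : Submodule ℝ F}
    (hinj : ∀ z ∈ N, f z = 0 → z = 0) (himg : N.map f ≤ M) :
    finrank ℝ N ≤ finrank ℝ M := by
  have h := finrank_map_add_finrank_inf_ker' f N
  have hbot : N ⊓ LinearMap.ker f = ⊥ := by
    rw [Submodule.eq_bot_iff]
    exact fun x hx => hinj x hx.1 hx.2
  rw [hbot, finrank_bot] at h
  have := Submodule.finrank_mono himg
  omega

lemma finrank_prod_submodule (p : Submodule ℝ E) (q : Submodule ℝ F) :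
    finrank ℝ (p.prod q) = finrank ℝ p + finrank ℝ q := by
  have h1 := finrank_map_add_finrank_inf_ker' (LinearMap.fst ℝ E F) (p.prod q)
  have hmap1 : (p.prod q).map (LinearMap.fst ℝ E F) = p := by
    ext x
    simp only [Submodule.mem_map, Submodule.mem_prod, LinearMap.fst_apply]
    constructor
    · rintro ⟨⟨a, b⟩, ⟨hpa, hqb⟩, rfl⟩; exact hpa
    · intro hx; exact ⟨(x, 0), ⟨hx, q.zero_mem⟩, rfl⟩
  have h2 := finrank_map_add_finrank_inf_ker' (LinearMap.snd ℝ E F)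
    ((p.prod q) ⊓ LinearMap.ker (LinearMap.fst ℝ E F))
  have hmap2 : ((p.prod q) ⊓ LinearMap.ker (LinearMap.fst ℝ E F)).map (LinearMap.snd ℝ E F)
      = q := by
    ext y
    simp only [Submodule.mem_map, Submodule.mem_inf, Submodule.mem_prod, LinearMap.mem_ker,
      LinearMap.fst_apply, LinearMap.snd_apply]
    constructor
    · rintro ⟨⟨a, b⟩, ⟨⟨hpa, hqb⟩, ha0⟩, rfl⟩; exact hqb
    · intro hy; exact ⟨(0, y), ⟨⟨p.zero_mem, hy⟩, rfl⟩, rfl⟩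
  have hbot : (p.prod q) ⊓ LinearMap.ker (LinearMap.fst ℝ E F)
      ⊓ LinearMap.ker (LinearMap.snd ℝ E F) = ⊥ := by
    rw [Submodule.eq_bot_iff]
    rintro ⟨a, b⟩ ⟨⟨_, ha⟩, hb⟩
    have ha' : a = 0 := ha
    have hb' : b = 0 := hb
    have : (a, b) = ((0 : E), (0 : F)) := by rw [ha', hb']
    simpa using this
  rw [hmap1] at h1
  rw [hmap2, hbot, finrank_bot] at h2
  omega

lemma map_mkQ_self (p : Submodule ℝ E) : p.map p.mkQ = ⊥ := by
  rw [Submodule.eq_bot_iff]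
  rintro x ⟨y, hy, rfl⟩
  simpa [Submodule.mkQ_apply] using (Submodule.Quotient.mk_eq_zero p).2 hy

end Helpers

section P4
variable {E : Type*} [AddCommGroup E] [Module ℝ E] [FiniteDimensional ℝ E]
  (σ : E →ₗ[ℝ] E →ₗ[ℝ] ℝ)

def posSet (P Λa Λb : Submodule ℝ E) : Set ℕ :=
  {k | ∃ W : Submodule ℝ E, W ≤ (Λa ⊔ Λb) ⊓ P ∧
    (∀ x ∈ W, x ≠ 0 → ∀ x1 ∈ Λa, ∀ x2 ∈ Λb, x = x1 + x2 → 0 < σ x1 x2) ∧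
    Module.finrank ℝ W = k}

lemma posSet_bddAbove (P Λa Λb : Submodule ℝ E) : BddAbove (posSet σ P Λa Λb) := by
  refine ⟨finrank ℝ E, fun k hk => ?_⟩
  obtain ⟨W, _, _, rfl⟩ := hk
  exact Submodule.finrank_le W

omit [FiniteDimensional ℝ E] in
lemma lag_isot {Λ : Submodule ℝ E} (h : IsLagrangian σ Λ) :
    ∀ u ∈ Λ, ∀ v ∈ Λ, σ u v = 0 := by
  intro u hu v hv
  have : u ∈ skewCompl σ Λ := h ▸ hu
  exact this v hv

omit [FiniteDimensional ℝ E] in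
lemma sigma_skew' (halt : ∀ x : E, σ x x = 0) (x y : E) : σ x y = - σ y x := by
  have h := halt (x + y)
  simp only [map_add, LinearMap.add_apply] at h
  rw [halt x, halt y] at h
  linarith

omit [FiniteDimensional ℝ E] in
lemma qwd {Λa Λb : Submodule ℝ E} (ha : IsLagrangian σ Λa) (hb : IsLagrangian σ Λb)
    {x1 y1 x2 y2 : E} (hx1 : x1 ∈ Λa) (hy1 : y1 ∈ Λa) (hx2 : x2 ∈ Λb) (hy2 : y2 ∈ Λb)
    (h : x1 + x2 = y1 + y2) : σ x1 x2 = σ y1 y2 := by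
  have hz : x1 - y1 = y2 - x2 := by
    rw [sub_eq_sub_iff_add_eq_add, h]
    exact add_comm y1 y2
  have hmb : x1 - y1 ∈ Λb := hz ▸ sub_mem hy2 hx2
  have hma : x1 - y1 ∈ Λa := sub_mem hx1 hy1
  have e0 : y1 + (x1 - y1) = x1 := by abel
  have e1 : σ x1 x2 = σ y1 x2 := by
    rw [← e0, map_add, LinearMap.add_apply, lag_isot σ hb _ hmb _ hx2, add_zero]
  have e2 : y2 - (x1 - y1) = x2 := by rw [hz]; abel
  rw [e1, ← e2, map_sub, lag_isot σ ha _ hy1 _ hma, sub_zero]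

lemma exists_nonpos_compl (halt : ∀ x : E, σ x x = 0) (P Λa Λb : Submodule ℝ E)
    (hP : IsLagrangian σ P) (ha : IsLagrangian σ Λa) (hb : IsLagrangian σ Λb) :
    ∃ C : Submodule ℝ E, C ≤ (Λa ⊔ Λb) ⊓ P ∧
      (∀ x ∈ C, ∀ x1 ∈ Λa, ∀ x2 ∈ Λb, x = x1 + x2 → σ x1 x2 ≤ 0) ∧
      finrank ℝ ↥((Λa ⊔ Λb) ⊓ P) ≤ finrank ℝ ↥C + sSup (posSet σ P Λa Λb) := by
  classical
  set V : Submodule ℝ E := (Λa ⊔ Λb) ⊓ P with hVdef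
  -- a linear choice of decomposition
  let f : (↥Λa × ↥Λb) →ₗ[ℝ] E := Λa.subtype.coprod Λb.subtype
  have hrange : LinearMap.range f = Λa ⊔ Λb := by
    rw [LinearMap.range_coprod, Submodule.range_subtype, Submodule.range_subtype]
  obtain ⟨s, hs⟩ := f.rangeRestrict.exists_rightInverse_of_surjective
    (LinearMap.range_eq_top.2 f.surjective_rangeRestrict)
  have hVle : V ≤ LinearMap.range f := by rw [hrange]; exact inf_le_left
  let j : ↥V →ₗ[ℝ] ↥(LinearMap.range f) := Submodule.inclusion hVle
  let r : ↥V →ₗ[ℝ] E := Λa.subtype ∘ₗ (LinearMap.fst ℝ ↥Λa ↥Λb) ∘ₗ s ∘ₗ j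
  have hfs : ∀ x : ↥V, f (s (j x)) = (x : E) := by
    intro x
    have h1 : f.rangeRestrict (s (j x)) = j x := by
      have := congrArg (fun g => g (j x)) hs
      exact this
    have h2 := congrArg (Subtype.val) h1
    exact h2
  have hra : ∀ x : ↥V, r x ∈ Λa := fun x => ((s (j x)).1).2
  have hrb : ∀ x : ↥V, (x : E) - r x ∈ Λb := by
    intro x
    have h1 := hfs x
    have h2 : ((s (j x)).1 : E) + ((s (j x)).2 : E) = (x : E) := h1
    have h3 : (x : E) - r x = ((s (j x)).2 : E) := by
      simp only [r, LinearMap.coe_comp, Function.comp_apply, Submodule.coe_subtype,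
        LinearMap.fst_apply]
      rw [← h2]; abel
    rw [h3]; exact ((s (j x)).2).2
  have hsum : ∀ x : ↥V, r x + ((x : E) - r x) = (x : E) := fun x => by abel
  -- the bilinear form
  let B : LinearMap.BilinForm ℝ ↥V := LinearMap.mk₂ ℝ
    (fun x y => σ (r x) ((y : E) - r y))
    (fun m n y => by
      show σ (r (m + n)) ((y : E) - r y) = σ (r m) ((y : E) - r y) + σ (r n) ((y : E) - r y)
      rw [map_add, map_add, LinearMap.add_apply])
    (fun c m y => by
      show σ (r (c • m)) ((y : E) - r y) = c • σ (r m) ((y : E) - r y)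
      rw [map_smul, map_smul, LinearMap.smul_apply])
    (fun m y z => by
      show σ (r m) (((y + z : ↥V) : E) - r (y + z))
        = σ (r m) ((y : E) - r y) + σ (r m) ((z : E) - r z)
      have h : ((y + z : ↥V) : E) - r (y + z) = ((y : E) - r y) + ((z : E) - r z) := by
        rw [map_add, Submodule.coe_add]; abel
      rw [h, map_add])
    (fun c m y => by
      show σ (r m) (((c • y : ↥V) : E) - r (c • y)) = c • σ (r m) ((y : E) - r y)
      have h : ((c • y : ↥V) : E) - r (c • y) = c • ((y : E) - r y) := by
        rw [map_smul, Submodule.coe_smul, smul_sub]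
      rw [h, map_smul])
  have hBapp : ∀ x y : ↥V, B x y = σ (r x) ((y : E) - r y) := fun x y => rfl
  have hBval : ∀ (y : ↥V) (x1 x2 : E), x1 ∈ Λa → x2 ∈ Λb → (y : E) = x1 + x2 →
      σ x1 x2 = B y y := by
    intro y x1 x2 h1 h2 hsum12
    rw [hBapp]
    exact qwd σ ha hb h1 (hra y) h2 (hrb y) (by rw [← hsum12, hsum y])
  have hBsymm : B.IsSymm := by
    refine ⟨fun x y => ?_⟩
    have hxP : (x : E) ∈ P := x.2.2
    have hyP : (y : E) ∈ P := y.2.2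
    have h0 : σ ((r x) + ((x : E) - r x)) ((r y) + ((y : E) - r y)) = 0 := by
      rw [hsum x, hsum y]
      exact lag_isot σ hP _ hxP _ hyP
    simp only [map_add, LinearMap.add_apply] at h0
    rw [lag_isot σ ha _ (hra x) _ (hra y), lag_isot σ hb _ (hrb x) _ (hrb y)] at h0
    have hkey : σ (r x) ((y:E) - r y) = - σ ((x:E) - r x) (r y) := by linarith
    rw [hBapp x y, hBapp y x, hkey,
      sigma_skew' σ halt (r y) ((x:E) - r x)]

  haveI : Invertible (2 : ℝ) := invertibleOfNonzero two_ne_zero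
  obtain ⟨v, hv⟩ := LinearMap.BilinForm.exists_orthogonal_basis (LinearMap.BilinForm.isSymm_iff.1 hBsymm)
  let t : Finset (Fin (finrank ℝ ↥V)) := Finset.univ.filter (fun i => 0 < B (v i) (v i))
  -- generic diagonalization computation
  have key : ∀ (u : Finset (Fin (finrank ℝ ↥V))) (x : ↥V),
      x ∈ span ℝ (Set.range (fun i : {i // i ∈ u} => v ↑i)) →
      ∃ c : {i // i ∈ u} → ℝ, (∑ i, c i • v ↑i = x) ∧
        B x x = ∑ i, c i * (c i * B (v ↑i) (v ↑i)) := by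
    intro u x hx
    rw [mem_span_range_iff_exists_fun] at hx
    obtain ⟨c, hc⟩ := hx
    refine ⟨c, hc, ?_⟩
    have e2 : ∀ i : {i // i ∈ u}, B (v ↑i) x = c i * B (v ↑i) (v ↑i) := by
      intro i
      conv_lhs => rw [← hc]
      rw [map_sum]
      rw [Finset.sum_eq_single i]
      · rw [map_smul, smul_eq_mul]
      · intro j _ hj
        have h0 : B (v ↑j) (v ↑i) = 0 := hv (fun h => hj (Subtype.ext h))
        have h1 : B (v ↑i) (v ↑j) = 0 := by
          have := hBsymm.eq (v ↑i) (v ↑j)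
          rw [← this] at h0
          exact h0
        rw [map_smul, smul_eq_mul, h1, mul_zero]
      · intro h
        exact absurd (Finset.mem_univ i) h
    have e1 : B x x = ∑ i : {i // i ∈ u}, c i * B (v ↑i) x := by
      have := congrArg (fun z : ↥V => B z x) hc
      simp only [map_sum, LinearMap.sum_apply] at this
      rw [← this]
      refine Finset.sum_congr rfl fun i _ => ?_
      rw [map_smul, LinearMap.smul_apply, smul_eq_mul]
    rw [e1]
    exact Finset.sum_congr rfl fun i _ => by rw [e2 i]
  -- nonpositive part
  let C0 : Submodule ℝ ↥V := span ℝ (Set.range (fun i : {i // i ∈ tᶜ} => v ↑i))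
  let P0 : Submodule ℝ ↥V := span ℝ (Set.range (fun i : {i // i ∈ t} => v ↑i))
  have hC0rank : finrank ℝ ↥C0 = tᶜ.card := by
    have h1 : LinearIndependent ℝ (fun i : {i // i ∈ tᶜ} => v ↑i) :=
      v.linearIndependent.comp _ Subtype.val_injective
    rw [finrank_span_eq_card h1]
    exact Fintype.card_coe _
  have hP0rank : finrank ℝ ↥P0 = t.card := by
    have h1 : LinearIndependent ℝ (fun i : {i // i ∈ t} => v ↑i) :=
      v.linearIndependent.comp _ Subtype.val_injective
    rw [finrank_span_eq_card h1]
    exact Fintype.card_coe _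
  have hC0neg : ∀ x ∈ C0, B x x ≤ 0 := by
    intro x hx
    obtain ⟨c, _, hBx⟩ := key tᶜ x hx
    rw [hBx]
    refine Finset.sum_nonpos fun i _ => ?_
    have hit : ¬ (0 < B (v ↑i) (v ↑i)) := by
      have := i.2
      rw [Finset.mem_compl, Finset.mem_filter] at this
      exact fun hh => this ⟨Finset.mem_univ _, hh⟩
    nlinarith [sq_nonneg (c i), not_lt.1 hit]
  have hP0pos : ∀ x ∈ P0, x ≠ 0 → 0 < B x x := by
    intro x hx hxne
    obtain ⟨c, hc, hBx⟩ := key t x hx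
    rw [hBx]
    have hcne : ∃ i, c i ≠ 0 := by
      by_contra hcon
      push_neg at hcon
      apply hxne
      rw [← hc]
      simp [hcon]
    obtain ⟨i0, hi0⟩ := hcne
    refine Finset.sum_pos' (fun i _ => ?_) ⟨i0, Finset.mem_univ i0, ?_⟩
    · have hit : 0 < B (v ↑i) (v ↑i) := by
        have := i.2
        rw [Finset.mem_filter] at this
        exact this.2
      nlinarith [sq_nonneg (c i)]
    · have hit : 0 < B (v ↑i0) (v ↑i0) := by
        have := i0.2
        rw [Finset.mem_filter] at this
        exact this.2
      have : 0 < c i0 * c i0 := by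
        rcases lt_or_gt_of_ne hi0 with h | h
        · nlinarith
        · nlinarith
      nlinarith
  -- push to E
  refine ⟨C0.map V.subtype, ?_, ?_, ?_⟩
  · exact Submodule.map_subtype_le V C0
  · rintro x hx x1 h1 x2 h2 hx12
    obtain ⟨y, hy, rfl⟩ := hx
    rw [hBval y x1 x2 h1 h2 hx12]
    exact hC0neg y hy
  · have hmem : t.card ∈ posSet σ P Λa Λb := by
      refine ⟨P0.map V.subtype, Submodule.map_subtype_le V P0, ?_, ?_⟩
      · rintro x hx hxne x1 h1 x2 h2 hx12
        obtain ⟨y, hy, rfl⟩ := hx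
        have hyne : y ≠ 0 := by
          intro hcon
          apply hxne
          simp [hcon]
        rw [hBval y x1 x2 h1 h2 hx12]
        exact hP0pos y hy hyne
      · rw [Submodule.finrank_map_subtype_eq]
        exact hP0rank
    have hle := le_csSup (posSet_bddAbove σ P Λa Λb) hmem
    have hcards : t.card + tᶜ.card = finrank ℝ ↥V := by
      rw [Finset.card_add_card_compl]
      exact Fintype.card_fin _
    rw [Submodule.finrank_map_subtype_eq, hC0rank]
    omega

end P4


section DimLag
variable {E : Type*} [AddCommGroup E] [Module ℝ E] [FiniteDimensional ℝ E]

lemma dim_inf_lag (σ : E →ₗ[ℝ] E →ₗ[ℝ] ℝ)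
    (halt : ∀ x : E, σ x x = 0)
    (hnondeg : ∀ x : E, (∀ y : E, σ x y = 0) → x = 0)
    (A P : Submodule ℝ E) (hP : IsLagrangian σ P) :
    finrank ℝ ↥(A ⊓ P) + finrank ℝ E
      = finrank ℝ ↥A + finrank ℝ ↥P + finrank ℝ ↥(skewCompl σ A ⊓ P) := by
  have h1 := Submodule.finrank_sup_add_finrank_inf_eq A P
  have h2 := finrank_add_finrank_skewCompl σ halt hnondeg (A ⊔ P)
  rw [skewCompl_sup, ← hP] at h2
  omega

lemma posSet_sSup_mem (σ : E →ₗ[ℝ] E →ₗ[ℝ] ℝ) (P Λa Λb : Submodule ℝ E) :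
    sSup (posSet σ P Λa Λb) ∈ posSet σ P Λa Λb :=
  Nat.sSup_mem ⟨0, ⊥, bot_le, fun x hx hne => absurd hx (by simpa using hne), finrank_bot ℝ E⟩
    (posSet_bddAbove σ P Λa Λb)

end DimLag

section MainNat
variable {E : Type*} [AddCommGroup E] [Module ℝ E] [FiniteDimensional ℝ E]

set_option maxHeartbeats 2000000 in
lemma main_nat (σ : E →ₗ[ℝ] E →ₗ[ℝ] ℝ)
    (halt : ∀ x : E, σ x x = 0)
    (hnondeg : ∀ x : E, (∀ y : E, σ x y = 0) → x = 0)
    (P Λ1 Λ2 Λ3 : Submodule ℝ E)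
    (hP : IsLagrangian σ P) (hΛ1 : IsLagrangian σ Λ1)
    (hΛ2 : IsLagrangian σ Λ2) (hΛ3 : IsLagrangian σ Λ3) :
    sSup (posSet σ P Λ1 Λ3) + finrank ℝ ↥(Λ1 ⊓ Λ2 ⊓ P) + finrank ℝ ↥(Λ2 ⊓ Λ3 ⊓ P)
      ≤ sSup (posSet σ P Λ1 Λ2) + sSup (posSet σ P Λ2 Λ3)
        + finrank ℝ ↥(Λ2 ⊓ P) + finrank ℝ ↥(Λ1 ⊓ Λ3 ⊓ P) := by
  classical
  -- the three projections of E × E × E and the structure maps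
  let p1 : E × E × E →ₗ[ℝ] E := LinearMap.fst ℝ E (E × E)
  let p2 : E × E × E →ₗ[ℝ] E := (LinearMap.fst ℝ E E) ∘ₗ (LinearMap.snd ℝ E (E × E))
  let p3 : E × E × E →ₗ[ℝ] E := (LinearMap.snd ℝ E E) ∘ₗ (LinearMap.snd ℝ E (E × E))
  let π : E × E × E →ₗ[ℝ] E := p1 + p3
  let α : E × E × E →ₗ[ℝ] E := p1 + p2
  let β : E × E × E →ₗ[ℝ] E := p3 - p2
  have hπ : ∀ z : E × E × E, π z = z.1 + z.2.2 := fun z => rfl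
  have hα : ∀ z : E × E × E, α z = z.1 + z.2.1 := fun z => rfl
  have hβ : ∀ z : E × E × E, β z = z.2.2 - z.2.1 := fun z => rfl
  set T3 : Submodule ℝ (E × E × E) := Λ1.prod (Λ2.prod Λ3) with hT3
  set K : Submodule ℝ (E × E × E) := T3 ⊓ (P.comap α ⊓ P.comap β) with hK
  have memK : ∀ z : E × E × E, z ∈ K ↔
      (z.1 ∈ Λ1 ∧ z.2.1 ∈ Λ2 ∧ z.2.2 ∈ Λ3) ∧ z.1 + z.2.1 ∈ P ∧ z.2.2 - z.2.1 ∈ P := by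
    intro z
    rw [hK, Submodule.mem_inf, Submodule.mem_inf, Submodule.mem_comap, Submodule.mem_comap,
      hα, hβ, hT3]
    simp [Submodule.mem_prod]
  -- ==================== Step B : dimension counting ====================
  have h1 := dim_inf_lag σ halt hnondeg (Λ1 ⊔ Λ3) P hP
  rw [skewCompl_sup, ← hΛ1, ← hΛ3] at h1
  have h2 := Submodule.finrank_sup_add_finrank_inf_eq Λ1 Λ3
  have h3 := dim_inf_lag σ halt hnondeg ((Λ1 ⊓ Λ3) ⊔ Λ2) P hP
  rw [skewCompl_sup, skewCompl_inf σ halt hnondeg, ← hΛ1, ← hΛ2, ← hΛ3] at h3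
  have h4 := Submodule.finrank_sup_add_finrank_inf_eq (Λ1 ⊓ Λ3) Λ2
  -- kernel of π on K
  have h5 : finrank ℝ ↥(K ⊓ LinearMap.ker π)
      ≤ finrank ℝ ↥(((Λ1 ⊓ Λ3) ⊔ Λ2) ⊓ P) + finrank ℝ ↥((Λ1 ⊓ Λ3) ⊓ Λ2) := by
    have e1 := finrank_map_add_finrank_inf_ker' α (K ⊓ LinearMap.ker π)
    have e2 : (K ⊓ LinearMap.ker π).map α ≤ ((Λ1 ⊓ Λ3) ⊔ Λ2) ⊓ P := by
      rintro x ⟨z, ⟨hzK, hzker⟩, rfl⟩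
      obtain ⟨⟨hz1, hz2, hz3⟩, hzP1, _⟩ := (memK z).1 hzK
      have hπ0 : z.1 + z.2.2 = 0 := by rw [← hπ z]; exact LinearMap.mem_ker.1 hzker
      have hz13 : z.1 ∈ Λ1 ⊓ Λ3 := by
        refine ⟨hz1, ?_⟩
        have : z.1 = -z.2.2 := eq_neg_of_add_eq_zero_left hπ0
        rw [this]; exact neg_mem hz3
      rw [hα]
      exact ⟨add_mem (Submodule.mem_sup_left hz13) (Submodule.mem_sup_right hz2), hzP1⟩
    have e3 : finrank ℝ ↥(K ⊓ LinearMap.ker π ⊓ LinearMap.ker α)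
        ≤ finrank ℝ ↥((Λ1 ⊓ Λ3) ⊓ Λ2) := by
      refine finrank_le_of_map_le (f := p1) ?_ ?_
      · rintro z ⟨⟨hzK, hzπ⟩, hzα⟩ h0
        have ha : z.1 = 0 := h0
        have hb : z.1 + z.2.1 = 0 := by rw [← hα z]; exact LinearMap.mem_ker.1 hzα
        have hc : z.1 + z.2.2 = 0 := by rw [← hπ z]; exact LinearMap.mem_ker.1 hzπ
        have hy : z.2.1 = 0 := by rw [ha, zero_add] at hb; exact hb
        have hcc : z.2.2 = 0 := by rw [ha, zero_add] at hc; exact hc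
        have : z = (z.1, z.2.1, z.2.2) := rfl
        rw [this, ha, hy, hcc]
        rfl
      · rintro x ⟨z, ⟨⟨hzK, hzπ⟩, hzα⟩, rfl⟩
        obtain ⟨⟨hz1, hz2, hz3⟩, _, _⟩ := (memK z).1 hzK
        have hb : z.1 + z.2.1 = 0 := by rw [← hα z]; exact LinearMap.mem_ker.1 hzα
        have hc : z.1 + z.2.2 = 0 := by rw [← hπ z]; exact LinearMap.mem_ker.1 hzπ
        have hmem3 : z.1 ∈ Λ3 := by
          have : z.1 = -z.2.2 := eq_neg_of_add_eq_zero_left hc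
          rw [this]; exact neg_mem hz3
        have hmem2 : z.1 ∈ Λ2 := by
          have : z.1 = -z.2.1 := eq_neg_of_add_eq_zero_left hb
          rw [this]; exact neg_mem hz2
        exact ⟨⟨hz1, hmem3⟩, hmem2⟩
    have e4 : finrank ℝ ↥((K ⊓ LinearMap.ker π).map α)
        ≤ finrank ℝ ↥(((Λ1 ⊓ Λ3) ⊔ Λ2) ⊓ P) := Submodule.finrank_mono e2
    omega
  -- dimension of K via the constraint map Φ
  set Φ : E × E × E →ₗ[ℝ] (E ⧸ P) × (E ⧸ P) := (P.mkQ ∘ₗ α).prod (P.mkQ ∘ₗ β) with hΦ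
  have hKeq : K = T3 ⊓ LinearMap.ker Φ := by
    rw [hK, hΦ, LinearMap.ker_prod, LinearMap.ker_comp, LinearMap.ker_comp, Submodule.ker_mkQ]
  have h6 := finrank_map_add_finrank_inf_ker' Φ T3
  rw [← hKeq] at h6
  have h7 : finrank ℝ ↥T3 = finrank ℝ ↥Λ1 + (finrank ℝ ↥Λ2 + finrank ℝ ↥Λ3) := by
    rw [hT3, finrank_prod_submodule, finrank_prod_submodule]
  -- bounding the image of Φ
  set S' : Submodule ℝ ((E ⧸ P) × (E ⧸ P)) := (Λ1.map P.mkQ).prod (Λ3.map P.mkQ) with hS'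
  set g : E →ₗ[ℝ] (E ⧸ P) × (E ⧸ P) := P.mkQ.prod (-P.mkQ) with hg
  set T' : Submodule ℝ ((E ⧸ P) × (E ⧸ P)) := Λ2.map g with hT'
  set hh : (E ⧸ P) →ₗ[ℝ] (E ⧸ P) × (E ⧸ P) := LinearMap.id.prod (-LinearMap.id) with hhh
  set J : Submodule ℝ (E ⧸ P) := (Λ1.map P.mkQ) ⊓ (Λ2.map P.mkQ) ⊓ (Λ3.map P.mkQ) with hJ
  have h8a : T3.map Φ ≤ S' ⊔ T' := by
    rintro x ⟨z, hz, rfl⟩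
    rw [hT3] at hz
    obtain ⟨hz1, hz2, hz3⟩ : z.1 ∈ Λ1 ∧ z.2.1 ∈ Λ2 ∧ z.2.2 ∈ Λ3 := by
      simpa [Submodule.mem_prod] using hz
    apply Submodule.mem_sup.2
    refine ⟨(P.mkQ z.1, P.mkQ z.2.2), ?_, g z.2.1, ⟨z.2.1, hz2, rfl⟩, ?_⟩
    · exact ⟨⟨z.1, hz1, rfl⟩, ⟨z.2.2, hz3, rfl⟩⟩
    · have : Φ z = (P.mkQ (z.1 + z.2.1), P.mkQ (z.2.2 - z.2.1)) := rfl
      rw [this]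
      have e1 : P.mkQ z.1 + P.mkQ z.2.1 = P.mkQ (z.1 + z.2.1) := (map_add _ _ _).symm
      have e2 : P.mkQ z.2.2 + (-(P.mkQ z.2.1)) = P.mkQ (z.2.2 - z.2.1) := by
        rw [← sub_eq_add_neg, ← map_sub]
      have : g z.2.1 = (P.mkQ z.2.1, -(P.mkQ z.2.1)) := rfl
      rw [this, Prod.mk_add_mk, e1, e2]
  have h8b : J.map hh ≤ S' ⊓ T' := by
    rintro x ⟨u, hu, rfl⟩
    rw [hJ] at hu
    obtain ⟨⟨hu1, hu2⟩, hu3⟩ := hu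
    constructor
    · exact ⟨hu1, neg_mem hu3⟩
    · obtain ⟨y, hy, rfl⟩ := hu2
      exact ⟨y, hy, rfl⟩
  have h8c : finrank ℝ ↥J ≤ finrank ℝ ↥(S' ⊓ T') := by
    refine finrank_le_of_map_le (f := hh) ?_ h8b
    intro u _ h0
    have : u = 0 := congrArg Prod.fst h0
    exact this
  have h8d := Submodule.finrank_sup_add_finrank_inf_eq S' T'
  have h8e : finrank ℝ ↥(T3.map Φ) ≤ finrank ℝ ↥(S' ⊔ T') := Submodule.finrank_mono h8a
  have h9 : finrank ℝ ↥S' = finrank ℝ ↥(Λ1.map P.mkQ) + finrank ℝ ↥(Λ3.map P.mkQ) := by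
    rw [hS', finrank_prod_submodule]
  have h10 := finrank_map_add_finrank_inf_ker' P.mkQ Λ1
  rw [Submodule.ker_mkQ] at h10
  have h11 := finrank_map_add_finrank_inf_ker' P.mkQ Λ3
  rw [Submodule.ker_mkQ] at h11
  have h10b := finrank_map_add_finrank_inf_ker' P.mkQ Λ2
  rw [Submodule.ker_mkQ] at h10b
  have hkerg : LinearMap.ker g = P := by
    ext x
    rw [hg, LinearMap.mem_ker, LinearMap.prod_apply]
    constructor
    · intro hx
      have : P.mkQ x = 0 := congrArg Prod.fst hx
      rwa [Submodule.mkQ_apply, Submodule.Quotient.mk_eq_zero] at this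
    · intro hx
      have h0 : P.mkQ x = 0 := by
        rw [Submodule.mkQ_apply, Submodule.Quotient.mk_eq_zero]; exact hx
      have h0' : (-P.mkQ) x = 0 := by
        rw [LinearMap.neg_apply, h0, neg_zero]
      rw [Function.prod, h0, h0']
      rfl
  have h12 := finrank_map_add_finrank_inf_ker' g Λ2
  rw [hkerg] at h12
  have h12' : finrank ℝ ↥T' = finrank ℝ ↥(Λ2.map g) := by rw [hT']
  -- the space Z and duality
  set Z : Submodule ℝ E := ((Λ1 ⊔ P) ⊓ (Λ3 ⊔ P)) ⊓ (Λ2 ⊔ P) with hZ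
  have hmksup : ∀ (Λ : Submodule ℝ E), ∀ z ∈ Λ ⊔ P, P.mkQ z ∈ Λ.map P.mkQ := by
    intro Λ z hz
    rcases Submodule.mem_sup.1 hz with ⟨a, ha, p, hp, rfl⟩
    refine ⟨a, ha, ?_⟩
    have : P.mkQ p = 0 := by
      rw [Submodule.mkQ_apply, Submodule.Quotient.mk_eq_zero]; exact hp
    rw [map_add, this, add_zero]
  have h13a : Z.map P.mkQ ≤ J := by
    rintro x ⟨z, hz, rfl⟩
    rw [hZ] at hz
    obtain ⟨⟨hz1, hz3⟩, hz2⟩ := hz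
    exact ⟨⟨hmksup Λ1 z hz1, hmksup Λ2 z hz2⟩, hmksup Λ3 z hz3⟩
  have h13b := finrank_map_add_finrank_inf_ker' P.mkQ Z
  rw [Submodule.ker_mkQ] at h13b
  have h13c : finrank ℝ ↥(Z ⊓ P) ≤ finrank ℝ ↥P := Submodule.finrank_mono inf_le_right
  have h13d : finrank ℝ ↥(Z.map P.mkQ) ≤ finrank ℝ ↥J := Submodule.finrank_mono h13a
  have h14 := finrank_add_finrank_skewCompl σ halt hnondeg (((Λ1 ⊓ P) ⊔ (Λ3 ⊓ P)) ⊔ (Λ2 ⊓ P))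
  rw [skewCompl_sup, skewCompl_sup, skewCompl_inf σ halt hnondeg,
    skewCompl_inf σ halt hnondeg, skewCompl_inf σ halt hnondeg,
    ← hΛ1, ← hΛ2, ← hΛ3, ← hP, ← hZ] at h14
  have h15 := Submodule.finrank_sup_add_finrank_inf_eq ((Λ1 ⊓ P) ⊔ (Λ3 ⊓ P)) (Λ2 ⊓ P)
  have h16 := Submodule.finrank_sup_add_finrank_inf_eq (Λ1 ⊓ P) (Λ3 ⊓ P)
  have hACeq : (Λ1 ⊓ P) ⊓ (Λ3 ⊓ P) = (Λ1 ⊓ Λ3) ⊓ P := by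
    rw [inf_inf_inf_comm, inf_idem]
  rw [hACeq] at h16
  have h17 := Submodule.finrank_sup_add_finrank_inf_eq (Λ1 ⊓ Λ2 ⊓ P) (Λ2 ⊓ Λ3 ⊓ P)
  have h18 : finrank ℝ ↥((Λ1 ⊓ Λ2 ⊓ P) ⊔ (Λ2 ⊓ Λ3 ⊓ P))
      ≤ finrank ℝ ↥(((Λ1 ⊓ P) ⊔ (Λ3 ⊓ P)) ⊓ (Λ2 ⊓ P)) := by
    refine Submodule.finrank_mono (sup_le (le_inf ?_ ?_) (le_inf ?_ ?_))
    · exact le_trans (inf_le_inf_right P inf_le_left) le_sup_left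
    · exact inf_le_inf_right P inf_le_right
    · exact le_trans (inf_le_inf_right P inf_le_right) le_sup_right
    · exact inf_le_inf_right P inf_le_left
  have h19 : finrank ℝ ↥((Λ1 ⊓ Λ2 ⊓ P) ⊓ (Λ2 ⊓ Λ3 ⊓ P)) ≤ finrank ℝ ↥((Λ1 ⊓ Λ3) ⊓ P) := by
    refine Submodule.finrank_mono (le_inf (le_inf ?_ ?_) ?_)
    · exact le_trans inf_le_left (le_trans inf_le_left inf_le_left)
    · exact le_trans inf_le_right (le_trans inf_le_left inf_le_right)
    · exact le_trans inf_le_left inf_le_right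
  have h20 : finrank ℝ ↥(((Λ1 ⊔ Λ3) ⊓ Λ2) ⊓ P) ≤ finrank ℝ ↥(Λ2 ⊓ P) :=
    Submodule.finrank_mono (inf_le_inf_right P inf_le_right)
  -- ==================== Step C/D : transfer of positivity ====================
  obtain ⟨W, hWle, hWpos, hWrank⟩ := posSet_sSup_mem σ P Λ1 Λ3
  have c1 : K.map π ≤ (Λ1 ⊔ Λ3) ⊓ P := by
    rintro x ⟨z, hzK, rfl⟩
    obtain ⟨⟨hz1, hz2, hz3⟩, hzP1, hzP2⟩ := (memK z).1 hzK
    rw [hπ]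
    constructor
    · exact add_mem (Submodule.mem_sup_left hz1) (Submodule.mem_sup_right hz3)
    · have e : z.1 + z.2.2 = (z.1 + z.2.1) + (z.2.2 - z.2.1) := by abel
      rw [e]; exact add_mem hzP1 hzP2
  have c2 := Submodule.finrank_sup_add_finrank_inf_eq W (K.map π)
  have c3 : finrank ℝ ↥(W ⊔ K.map π) ≤ finrank ℝ ↥((Λ1 ⊔ Λ3) ⊓ P) :=
    Submodule.finrank_mono (sup_le hWle c1)
  set W2 : Submodule ℝ (E × E × E) := K ⊓ W.comap π with hW2
  have c4 : W2.map π = W ⊓ K.map π := by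
    ext x
    constructor
    · rintro ⟨z, ⟨hzK, hzW⟩, rfl⟩
      exact ⟨hzW, ⟨z, hzK, rfl⟩⟩
    · rintro ⟨hxW, z, hzK, rfl⟩
      exact ⟨z, ⟨hzK, hxW⟩, rfl⟩
  have c5 := finrank_map_add_finrank_inf_ker' π W2
  rw [c4] at c5
  obtain ⟨C12, hC12le, hC12neg, hC12rank⟩ := exists_nonpos_compl σ halt P Λ1 Λ2 hP hΛ1 hΛ2
  obtain ⟨C23, hC23le, hC23neg, hC23rank⟩ := exists_nonpos_compl σ halt P Λ2 Λ3 hP hΛ2 hΛ3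
  set g2 : E × E × E →ₗ[ℝ] (E ⧸ C12) × (E ⧸ C23) := (C12.mkQ ∘ₗ α).prod (C23.mkQ ∘ₗ β) with hg2
  have c6 := finrank_map_add_finrank_inf_ker' g2 K
  have c7 : K.map g2 ≤ (((Λ1 ⊔ Λ2) ⊓ P).map C12.mkQ).prod (((Λ2 ⊔ Λ3) ⊓ P).map C23.mkQ) := by
    rintro x ⟨z, hzK, rfl⟩
    obtain ⟨⟨hz1, hz2, hz3⟩, hzP1, hzP2⟩ := (memK z).1 hzK
    have e : g2 z = (C12.mkQ (α z), C23.mkQ (β z)) := rfl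
    rw [e]
    constructor
    · refine ⟨α z, ⟨?_, ?_⟩, rfl⟩
      · rw [hα]; exact add_mem (Submodule.mem_sup_left hz1) (Submodule.mem_sup_right hz2)
      · rw [hα]; exact hzP1
    · refine ⟨β z, ⟨?_, ?_⟩, rfl⟩
      · rw [hβ]; exact sub_mem (Submodule.mem_sup_right hz3) (Submodule.mem_sup_left hz2)
      · rw [hβ]; exact hzP2
  have c8 := finrank_map_add_finrank_inf_ker' C12.mkQ ((Λ1 ⊔ Λ2) ⊓ P)
  rw [Submodule.ker_mkQ, inf_eq_right.2 hC12le] at c8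
  have c9 := finrank_map_add_finrank_inf_ker' C23.mkQ ((Λ2 ⊔ Λ3) ⊓ P)
  rw [Submodule.ker_mkQ, inf_eq_right.2 hC23le] at c9
  have c10 : finrank ℝ ↥(K.map g2)
      ≤ finrank ℝ ↥(((Λ1 ⊔ Λ2) ⊓ P).map C12.mkQ) + finrank ℝ ↥(((Λ2 ⊔ Λ3) ⊓ P).map C23.mkQ) := by
    have := Submodule.finrank_mono c7
    rwa [finrank_prod_submodule] at this
  have c11 : W2 ⊓ (K ⊓ LinearMap.ker g2) ≤ LinearMap.ker π := by
    rintro z ⟨⟨hzK, hzW⟩, _, hzg⟩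
    rw [LinearMap.mem_ker]
    by_contra hne
    obtain ⟨⟨hz1, hz2, hz3⟩, hzP1, hzP2⟩ := (memK z).1 hzK
    have hg0 : g2 z = 0 := LinearMap.mem_ker.1 hzg
    have hα0 : α z ∈ C12 := by
      have e : C12.mkQ (α z) = 0 := congrArg Prod.fst hg0
      rwa [Submodule.mkQ_apply, Submodule.Quotient.mk_eq_zero] at e
    have hβ0 : β z ∈ C23 := by
      have e : C23.mkQ (β z) = 0 := congrArg Prod.snd hg0
      rwa [Submodule.mkQ_apply, Submodule.Quotient.mk_eq_zero] at e
    have hpos : 0 < σ z.1 z.2.2 :=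
      hWpos (π z) hzW hne z.1 hz1 z.2.2 hz3 (hπ z)
    have hn1 : σ z.1 z.2.1 ≤ 0 := hC12neg (α z) hα0 z.1 hz1 z.2.1 hz2 (hα z)
    have hn2 : σ (-z.2.1) z.2.2 ≤ 0 :=
      hC23neg (β z) hβ0 (-z.2.1) (neg_mem hz2) z.2.2 hz3 (by rw [hβ]; abel)
    have hid : σ (z.1 + z.2.1) (z.2.2 - z.2.1) = 0 := lag_isot σ hP _ hzP1 _ hzP2
    simp only [map_add, map_sub, LinearMap.add_apply, LinearMap.sub_apply] at hid
    have hyy : σ z.2.1 z.2.1 = 0 := halt _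
    have hneg : σ (-z.2.1) z.2.2 = - σ z.2.1 z.2.2 := by
      rw [map_neg, LinearMap.neg_apply]
    linarith
  have c12 := Submodule.finrank_sup_add_finrank_inf_eq W2 (K ⊓ LinearMap.ker g2)
  have c12a : finrank ℝ ↥(W2 ⊔ (K ⊓ LinearMap.ker g2)) ≤ finrank ℝ ↥K :=
    Submodule.finrank_mono (sup_le inf_le_left inf_le_left)
  have c12b : finrank ℝ ↥(W2 ⊓ (K ⊓ LinearMap.ker g2))
      ≤ finrank ℝ ↥(W2 ⊓ LinearMap.ker π) :=
    Submodule.finrank_mono (le_inf inf_le_left c11)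
  have c13 : finrank ℝ ↥(W2 ⊓ LinearMap.ker π) ≤ finrank ℝ ↥(K ⊓ LinearMap.ker π) :=
    Submodule.finrank_mono (inf_le_inf_right _ inf_le_left)
  have cB := finrank_map_add_finrank_inf_ker' π K
  have hn1 : finrank ℝ ↥Λ1 + finrank ℝ ↥Λ1 = finrank ℝ E := by
    have := finrank_add_finrank_skewCompl σ halt hnondeg Λ1
    rwa [← hΛ1] at this
  have hn2 : finrank ℝ ↥Λ2 + finrank ℝ ↥Λ2 = finrank ℝ E := by
    have := finrank_add_finrank_skewCompl σ halt hnondeg Λ2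
    rwa [← hΛ2] at this
  have hn3 : finrank ℝ ↥Λ3 + finrank ℝ ↥Λ3 = finrank ℝ E := by
    have := finrank_add_finrank_skewCompl σ halt hnondeg Λ3
    rwa [← hΛ3] at this
  have hnP : finrank ℝ ↥P + finrank ℝ ↥P = finrank ℝ E := by
    have := finrank_add_finrank_skewCompl σ halt hnondeg P
    rwa [← hP] at this
  -- ==================== conclusion ====================
  rw [← hWrank]
  omega

end MainNat


/- STATEMENT 12 -/
theorem stmt_12 {E : Type*} [AddCommGroup E] [Module ℝ E] [FiniteDimensional ℝ E]
    (σ : E →ₗ[ℝ] E →ₗ[ℝ] ℝ)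
    (halt : ∀ x : E, σ x x = 0)
    (hnondeg : ∀ x : E, (∀ y : E, σ x y = 0) → x = 0)
    (P Λ1 Λ2 Λ3 : Submodule ℝ E)
    (hP : IsLagrangian σ P) (hΛ1 : IsLagrangian σ Λ1)
    (hΛ2 : IsLagrangian σ Λ2) (hΛ3 : IsLagrangian σ Λ3) :
    maslovInd σ P Λ1 Λ3 ≤ maslovInd σ P Λ1 Λ2 + maslovInd σ P Λ2 Λ3 := by
  have key := main_nat σ halt hnondeg P Λ1 Λ2 Λ3 hP hΛ1 hΛ2 hΛ3
  have e13 : posIndPair σ P Λ1 Λ3 = sSup (posSet σ P Λ1 Λ3) := rfl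
  have e12 : posIndPair σ P Λ1 Λ2 = sSup (posSet σ P Λ1 Λ2) := rfl
  have e23 : posIndPair σ P Λ2 Λ3 = sSup (posSet σ P Λ2 Λ3) := rfl
  have keyq : ((sSup (posSet σ P Λ1 Λ3) : ℕ) : ℚ) + ((finrank ℝ ↥(Λ1 ⊓ Λ2 ⊓ P) : ℕ) : ℚ)
      + ((finrank ℝ ↥(Λ2 ⊓ Λ3 ⊓ P) : ℕ) : ℚ)
      ≤ ((sSup (posSet σ P Λ1 Λ2) : ℕ) : ℚ) + ((sSup (posSet σ P Λ2 Λ3) : ℕ) : ℚ)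
        + ((finrank ℝ ↥(Λ2 ⊓ P) : ℕ) : ℚ) + ((finrank ℝ ↥(Λ1 ⊓ Λ3 ⊓ P) : ℕ) : ℚ) := by
    exact_mod_cast key
  unfold maslovInd
  rw [e13, e12, e23]
  linarith
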